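/- In a tournament, if a vertex v is contained in no directed triangle, then the tournament T has a feedback arc set of size at most k if and only if T with v deleted has a feedback arc set of size at most k. -/

import Mathlib

/-- A tournament: irreflexive, and exactly one arc between every pair of distinct vertices. -/
def IsTournament {V : Type*} (r : V → V → Prop) : Prop :=
  (∀ v, ¬ r v v) ∧ ∀ u v : V, u ≠ v → (r u v ↔ ¬ r v u)

/-- A digraph (given by its arc relation) is acyclic: no directed cycle. -/
def Acyclic {V : Type*} (r : V → V → Prop) : Prop :=
  ∀ v, ¬ Relation.TransGen r v v

/-- If a vertex `v` lies in no directed triangle, then `T` has a feedback arc set of size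
at most `k` iff `T - v` has a feedback arc set of size at most `k`. -/
theorem stmt0 {V : Type*} [Fintype V] (r : V → V → Prop) (hT : IsTournament r)
    (v : V) (hv : ∀ a b : V, ¬ (r v a ∧ r a b ∧ r b v)) (k : ℕ) :
    (∃ F : Finset (V × V), F.card ≤ k ∧
        Acyclic (fun a b => r a b ∧ (a, b) ∉ F)) ↔
    (∃ F : Finset ({x : V // x ≠ v} × {x : V // x ≠ v}), F.card ≤ k ∧
        Acyclic (fun a b : {x : V // x ≠ v} => r a.1 b.1 ∧ (a, b) ∉ F)) := by
  classical
  obtain ⟨hirr, hasym⟩ := hT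
  constructor
  · rintro ⟨F, hcard, hac⟩
    refine ⟨Finset.univ.filter
      (fun p : {x : V // x ≠ v} × {x : V // x ≠ v} => (p.1.1, p.2.1) ∈ F), ?_, ?_⟩
    · refine le_trans (Finset.card_le_card_of_injOn (fun p => (p.1.1, p.2.1)) ?_ ?_) hcard
      · intro p hp
        exact (Finset.mem_filter.mp hp).2
      · intro p _ q _ h
        ext
        · exact congrArg Prod.fst h
        · exact congrArg Prod.snd h
    · intro a ha
      apply hac a.1
      refine Relation.TransGen.lift Subtype.val ?_ _ _ ha
      intro x y hxy
      refine ⟨hxy.1, fun hmem => hxy.2 ?_⟩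
      simp [Finset.mem_filter, hmem]
  · rintro ⟨F', hcard, hac⟩
    set F := F'.image (fun p => (p.1.1, p.2.1)) with hF
    refine ⟨F, le_trans Finset.card_image_le hcard, ?_⟩
    set r' := fun a b => r a b ∧ (a, b) ∉ F with hr'
    -- out-neighborhood of v is closed under r'
    have hstep1 : ∀ a b : V, r v a → r' a b → r v b := by
      intro a b hva hab
      obtain ⟨hab, -⟩ := hab
      have hav : a ≠ v := fun e => hirr v (e ▸ hva)
      have hbv : b ≠ v := by
        intro e
        subst e
        exact (hasym a b hav).mp hab hva
      have hnb : ¬ r b v := fun hbv' => hv a b ⟨hva, hab, hbv'⟩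
      exact (hasym v b (Ne.symm hbv)).mpr hnb
    have hA : ∀ a b : V, Relation.TransGen r' a b → r v a → r v b := by
      intro a b h
      induction h with
      | single h => exact fun hva => hstep1 _ _ hva h
      | tail _ h2 ih => exact fun hva => hstep1 _ _ (ih hva) h2
    have hvv : ¬ Relation.TransGen r' v v := by
      intro h
      obtain ⟨b, hvb, hbv⟩ := Relation.TransGen.head'_iff.mp h
      rcases (Relation.reflTransGen_iff_eq_or_transGen.mp hbv) with he | ht
      · exact hirr _ (he ▸ hvb).1
      · exact hirr v (hA b v ht hvb.1)
    -- lifting paths avoiding v to the subtype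
    have hstep : ∀ (a b : V) (ha : a ≠ v) (hb : b ≠ v), r' a b →
        (fun x y : {x : V // x ≠ v} => r x.1 y.1 ∧ (x, y) ∉ F') ⟨a, ha⟩ ⟨b, hb⟩ := by
      intro a b ha hb hab
      refine ⟨hab.1, fun hmem => hab.2 ?_⟩
      exact Finset.mem_image_of_mem _ hmem
    have hE : ∀ a b : V, Relation.TransGen r' a b → ∀ (ha : a ≠ v) (hb : b ≠ v),
        Relation.TransGen (fun x y : {x : V // x ≠ v} => r x.1 y.1 ∧ (x, y) ∉ F')
          ⟨a, ha⟩ ⟨b, hb⟩ ∨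
        (Relation.TransGen r' a v ∧ Relation.TransGen r' v b) := by
      intro a b h
      induction h with
      | single h =>
        intro ha hb
        exact Or.inl (Relation.TransGen.single (hstep _ _ ha hb h))
      | tail h1 h2 ih =>
        rename_i b' c
        intro ha hc
        by_cases hb' : b' = v
        · subst hb'
          exact Or.inr ⟨h1, Relation.TransGen.single h2⟩
        · rcases ih ha hb' with hl | ⟨hav, hvb⟩
          · exact Or.inl (hl.tail (hstep _ _ hb' hc h2))
          · exact Or.inr ⟨hav, hvb.tail h2⟩
    intro c hc
    by_cases hcv : c = v
    · exact hvv (hcv ▸ hc)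
    · rcases hE c c hc hcv hcv with hl | ⟨h1, h2⟩
      · exact hac _ hl
      · exact hvv (h2.trans h1)
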